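/- Let m, k, a be positive integers and β a real number with 0 < β < 1 such that βm is a positive integer, a ≤ βm, k - a ≤ (1-β)m, and k ≤ m. Then binom(βm, a) · binom((1-β)m, k-a) ≤ binom(m,k) · binom(k,a) · β^a · (1-β)^(k-a) · (1 + 2k/m)^(k-a). -/

import Mathlib

set_option maxHeartbeats 1000000

open Finset

lemma choose_le_pow_mul_choose (n N r : ℕ) (t : ℝ) (ht : 0 ≤ t)
    (h : ∀ i < r, ((n - i : ℕ) : ℝ) ≤ t * ((N - i : ℕ) : ℝ)) :
    (n.choose r : ℝ) ≤ t ^ r * (N.choose r : ℝ) := by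
  have hfac : (0:ℝ) < (r.factorial : ℝ) := by exact_mod_cast r.factorial_pos
  have h1 : ((n.descFactorial r : ℕ) : ℝ) ≤ t ^ r * ((N.descFactorial r : ℕ) : ℝ) := by
    rw [Nat.descFactorial_eq_prod_range, Nat.descFactorial_eq_prod_range]
    push_cast [Nat.cast_prod]
    calc ∏ i ∈ range r, ((n - i : ℕ) : ℝ)
        ≤ ∏ i ∈ range r, (t * ((N - i : ℕ) : ℝ)) :=
          Finset.prod_le_prod (fun i _ => by positivity)
            (fun i hi => h i (mem_range.1 hi))
      _ = t ^ r * ∏ i ∈ range r, ((N - i : ℕ) : ℝ) := by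
          rw [Finset.prod_mul_distrib, prod_const, card_range]
  rw [Nat.descFactorial_eq_factorial_mul_choose, Nat.descFactorial_eq_factorial_mul_choose] at h1
  push_cast at h1
  calc (n.choose r : ℝ) = ((r.factorial : ℝ) * n.choose r) / r.factorial := by field_simp
    _ ≤ (t ^ r * ((r.factorial : ℝ) * N.choose r)) / r.factorial := by gcongr
    _ = t ^ r * (N.choose r : ℝ) := by field_simp

theorem binom_product_bound (m k a b : ℕ) (hm : 0 < m) (hk : 0 < k) (ha : 0 < a)
    (hb : 0 < b) (β : ℝ) (hβ0 : 0 < β) (hβ1 : β < 1) (hβm : (b : ℝ) = β * m)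
    (hab : a ≤ b) (hak : a ≤ k) (hka : (k : ℝ) - a ≤ (1 - β) * m) (hkm : k ≤ m) :
    (b.choose a : ℝ) * ((m - b).choose (k - a) : ℝ) ≤
      (m.choose k : ℝ) * (k.choose a : ℝ) * β ^ a * (1 - β) ^ (k - a) *
        (1 + 2 * (k : ℝ) / m) ^ (k - a) := by
  have hM : (0:ℝ) < m := by exact_mod_cast hm
  have hbm : b ≤ m := by
    have h1 : (b:ℝ) < m := by
      rw [hβm]
      nlinarith [mul_lt_mul_of_pos_right hβ1 hM]
    exact_mod_cast h1.le
  have hcc : k - a ≤ m - b := by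
    have h1 : ((k - a : ℕ):ℝ) ≤ ((m - b : ℕ):ℝ) := by
      rw [Nat.cast_sub hak, Nat.cast_sub hbm]
      nlinarith
    exact_mod_cast h1
  set c' : ℕ := k - a with hc'
  have hc'm : c' ≤ m := le_trans (Nat.sub_le _ _) hkm
  set d : ℕ := m - c' with hd
  have hbd : b ≤ d := by omega
  have had : a ≤ d := le_trans hab hbd
  have hdpos : (0:ℝ) < d := by
    have : 0 < d := lt_of_lt_of_le ha had
    exact_mod_cast this
  have hdR : (d:ℝ) = (m:ℝ) - (c' : ℝ) := by
    rw [hd, Nat.cast_sub hc'm]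
  have hc'R : (c' : ℝ) = (k:ℝ) - a := by
    rw [hc', Nat.cast_sub hak]
  -- Step A': choose (m-b) c' ≤ (1-β)^c' * choose m c'
  have stepA : ((m - b).choose c' : ℝ) ≤ (1 - β) ^ c' * (m.choose c' : ℝ) := by
    apply choose_le_pow_mul_choose _ _ _ _ (by linarith)
    intro i hi
    have hib : i ≤ m - b := le_trans hi.le hcc
    have him : i ≤ m := le_trans hib (Nat.sub_le _ _)
    rw [Nat.cast_sub hib, Nat.cast_sub hbm, Nat.cast_sub him]
    have : (0:ℝ) ≤ (i:ℝ) := Nat.cast_nonneg i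
    nlinarith
  -- Step B'a
  have stepBa : (b.choose a : ℝ) ≤ ((b:ℝ)/d) ^ a * (d.choose a : ℝ) := by
    apply choose_le_pow_mul_choose _ _ _ _ (by positivity)
    intro i hi
    have hib : i ≤ b := le_trans hi.le hab
    have hid : i ≤ d := le_trans hib hbd
    rw [Nat.cast_sub hib, Nat.cast_sub hid, div_mul_eq_mul_div, le_div_iff₀ hdpos]
    have h1 : (b:ℝ) ≤ d := by exact_mod_cast hbd
    have h2 : (0:ℝ) ≤ (i:ℝ) := Nat.cast_nonneg i
    nlinarith
  -- Step B'b : ((b:ℝ)/d)^a ≤ β^a * (1+2k/m)^c'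
  set L : ℝ := Real.log (1 + 2 * (k:ℝ) / m) with hL
  have hbase : (1:ℝ) ≤ 1 + 2 * (k:ℝ) / m := by
    have : (0:ℝ) ≤ 2 * (k:ℝ) / m := by positivity
    linarith
  have hL0 : 0 ≤ L := Real.log_nonneg hbase
  have hkey : (k:ℝ) ≤ m * L := by
    have hs0 : (0:ℝ) ≤ (k:ℝ)/m := by positivity
    have hs1 : (k:ℝ)/m ≤ 1 := by rw [div_le_one hM]; exact_mod_cast hkm
    have hconv := convexOn_exp.2 (Set.mem_univ (0:ℝ)) (Set.mem_univ (1:ℝ))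
      (by linarith : (0:ℝ) ≤ 1 - (k:ℝ)/m) hs0 (by ring)
    simp only [smul_eq_mul, mul_zero, mul_one, zero_add, Real.exp_zero] at hconv
    have he : Real.exp 1 < 2.7182818286 := Real.exp_one_lt_d9
    have hexp : Real.exp ((k:ℝ)/m) ≤ 1 + 2 * (k:ℝ) / m := by
      have h2 : 2 * (k:ℝ) / m = 2 * ((k:ℝ)/m) := by ring
      rw [h2]
      nlinarith [mul_le_mul_of_nonneg_left he.le hs0]
    have hlog2 := (Real.le_log_iff_exp_le
      (by linarith : (0:ℝ) < 1 + 2*(k:ℝ)/m)).2 hexp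
    rw [← hL] at hlog2
    calc (k:ℝ) = m * ((k:ℝ)/m) := by field_simp
      _ ≤ m * L := mul_le_mul_of_nonneg_left hlog2 hM.le
  have hadL : (a:ℝ) ≤ (d:ℝ) * L := by
    rcases le_or_gt 1 L with h | h
    · have h1 : (a:ℝ) ≤ d := by exact_mod_cast had
      nlinarith
    · have h1 : (c':ℝ) * L ≤ (c':ℝ) := by
        have : (0:ℝ) ≤ (c':ℝ) := Nat.cast_nonneg c'
        nlinarith
      rw [hdR]
      nlinarith [hc'R, hkey]
  have stepBb : ((m:ℝ)/d) ^ a ≤ (1 + 2 * (k:ℝ) / m) ^ c' := by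
    have hmd : (0:ℝ) < (m:ℝ)/d := by positivity
    rw [← Real.log_le_log_iff (by positivity) (by positivity),
      Real.log_pow, Real.log_pow, ← hL]
    have hlog : Real.log ((m:ℝ)/d) ≤ (c':ℝ)/d := by
      have h1 := Real.log_le_sub_one_of_pos hmd
      have h2 : (m:ℝ)/d - 1 = (c':ℝ)/d := by
        field_simp
        linarith [hdR]
      linarith
    calc (a:ℝ) * Real.log ((m:ℝ)/d) ≤ (a:ℝ) * ((c':ℝ)/d) := by
          apply mul_le_mul_of_nonneg_left hlog (Nat.cast_nonneg a)
      _ ≤ (c':ℝ) * L := by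
          rw [mul_div_assoc']
          rw [div_le_iff₀ hdpos]  -- a * c' / d ≤ c' * L ↔ a*c' ≤ c'*L*d
          nlinarith [Nat.cast_nonneg (α := ℝ) c']
  have stepB : (b.choose a : ℝ) ≤ β ^ a * (1 + 2 * (k:ℝ) / m) ^ c' * (d.choose a : ℝ) := by
    have h1 : ((b:ℝ)/d) ^ a = β ^ a * ((m:ℝ)/d) ^ a := by
      rw [← mul_pow]
      congr 1
      rw [hβm]
      field_simp
    calc (b.choose a : ℝ) ≤ ((b:ℝ)/d) ^ a * (d.choose a : ℝ) := stepBa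
      _ = β ^ a * ((m:ℝ)/d) ^ a * (d.choose a : ℝ) := by rw [h1]
      _ ≤ β ^ a * (1 + 2 * (k:ℝ) / m) ^ c' * (d.choose a : ℝ) := by
          apply mul_le_mul_of_nonneg_right _ (Nat.cast_nonneg _)
          exact mul_le_mul_of_nonneg_left stepBb (by positivity)
  -- identity
  have hid : (m.choose c' : ℕ) * d.choose a = m.choose k * k.choose a := by
    have h1 := Nat.choose_mul (n := m) (k := k) (s := c') (Nat.sub_le _ _)
    have h2 : k - c' = a := by omega
    have h3 : k.choose c' = k.choose a := by
      rw [hc', Nat.choose_symm hak]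
    rw [h3, h2] at h1
    rw [hd]
    exact h1.symm
  have hidR : (m.choose c' : ℝ) * (d.choose a : ℝ) = (m.choose k : ℝ) * (k.choose a : ℝ) := by
    exact_mod_cast congrArg (Nat.cast : ℕ → ℝ) hid
  calc (b.choose a : ℝ) * ((m - b).choose c' : ℝ)
      ≤ (β ^ a * (1 + 2 * (k:ℝ) / m) ^ c' * (d.choose a : ℝ)) *
        ((1 - β) ^ c' * (m.choose c' : ℝ)) := by
        apply mul_le_mul stepB stepA (Nat.cast_nonneg _)
        positivity
    _ = (m.choose c' : ℝ) * (d.choose a : ℝ) * β ^ a * (1 - β) ^ c' *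
        (1 + 2 * (k:ℝ) / m) ^ c' := by ring
    _ = (m.choose k : ℝ) * (k.choose a : ℝ) * β ^ a * (1 - β) ^ c' *
        (1 + 2 * (k:ℝ) / m) ^ c' := by rw [hidR]
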